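/- If two sets of mentions M and M' over a sentence of n words have the same separator sequence, then they cover the same set of words: for every word position k, some mention of M contains k if and only if some mention of M' contains k. -/
import Mathlib


inductive Marker | S | E | C
deriving DecidableEq

/-- Separator sequence of a set of mentions (intervals). Gap `k` lies between word `k` and word `k+1`. -/
def sep (M : Set (ℕ × ℕ)) (k : ℕ) : Set Marker :=
  {m | (m = Marker.S ∧ ∃ p ∈ M, p.1 = k + 1) ∨
       (m = Marker.E ∧ ∃ p ∈ M, p.2 = k) ∨
       (m = Marker.C ∧ ∃ p ∈ M, p.1 ≤ k ∧ k + 1 ≤ p.2)}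

/-- `M` is a set of mentions over a sentence of `n` words. -/
def Valid (n : ℕ) (M : Set (ℕ × ℕ)) : Prop :=
  ∀ p ∈ M, 1 ≤ p.1 ∧ p.1 ≤ p.2 ∧ p.2 ≤ n
theorem same_separators_same_coverage (n : ℕ) (M M' : Set (ℕ × ℕ))
    (hM : Valid n M) (hM' : Valid n M') (h : sep M = sep M') :
    ∀ k : ℕ, (∃ p ∈ M, p.1 ≤ k ∧ k ≤ p.2) ↔ (∃ p ∈ M', p.1 ≤ k ∧ k ≤ p.2) := by
  have key : ∀ (N : Set (ℕ × ℕ)), Valid n N → ∀ k : ℕ,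
      (∃ p ∈ N, p.1 ≤ k ∧ k ≤ p.2) ↔
        (Marker.E ∈ sep N k ∨ Marker.C ∈ sep N k) := by
    intro N hN k
    constructor
    · rintro ⟨p, hp, h1, h2⟩
      rcases eq_or_lt_of_le h2 with heq | hlt
      · exact Or.inl (Or.inr (Or.inl ⟨rfl, p, hp, heq.symm⟩))
      · exact Or.inr (Or.inr (Or.inr ⟨rfl, p, hp, h1, hlt⟩))
    · rintro (hE | hC)
      · rcases hE with ⟨h', _⟩ | ⟨_, p, hp, hb⟩ | ⟨h', _⟩
        · cases h'
        · exact ⟨p, hp, by have := hN p hp; omega⟩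
        · cases h'
      · rcases hC with ⟨h', _⟩ | ⟨h', _⟩ | ⟨_, p, hp, h1, h2⟩
        · cases h'
        · cases h'
        · exact ⟨p, hp, h1, by omega⟩
  intro k
  rw [key M hM k, key M' hM' k, h]
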